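/- arXiv:0805.4049 — 7 statements merged into one kernel-verified Lean document; each statement's English description precedes it below -/
import Mathlib

section
/- Let Σ be a finite nonempty alphabet and let m, n be integers with 0 < m < n. Suppose S is a set of words over Σ such that every word of S has length m or length n (i.e., S ⊆ Σ^m ∪ Σ^n). If the Kleene star S* is co-finite (its complement in Σ* is a finite set of words), then S contains every word of length m (i.e., Σ^m ⊆ S). -/
open Computability

/-- If `S ⊆ Σ^m ∪ Σ^n` with `0 < m < n` and the Kleene star `S∗` is co-finite
(its complement in the set of all words is finite), then `Σ^m ⊆ S`. -/
theorem kao_lemma {α : Type*} [Fintype α] [Nonempty α] {m n : ℕ}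
    (hm : 0 < m) (hmn : m < n) (S : Language α)
    (hS : ∀ w ∈ S, w.length = m ∨ w.length = n)
    (hcf : {w : List α | w ∉ S∗}.Finite) :
    ∀ w : List α, w.length = m → w ∈ S := by
  intro w hw
  by_contra hwS
  -- build v = w ++ u of length n
  obtain ⟨a⟩ := ‹Nonempty α›
  set u : List α := List.replicate (n - m) a with hu
  set v : List α := w ++ u with hvdef
  have hv : v.length = n := by
    simp [hvdef, hu, hw]
    omega
  -- the family of witnesses
  set g : ℕ → List α := fun k => (List.replicate k v).flatten ++ w with hg
  have hglen : ∀ k, (g k).length = k * n + m := by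
    intro k
    induction k with
    | zero => simp [hg, hw]
    | succ k ih =>
      have h : g (k + 1) = v ++ g k := by
        simp [hg, List.replicate_succ, List.flatten_cons, List.append_assoc]
      rw [h, List.length_append, ih, hv, Nat.succ_mul]
      omega
  -- key: g k ∉ S∗
  have key : ∀ k, g k ∉ S∗ := by
    intro k
    induction k with
    | zero =>
      intro hmem
      simp only [hg, List.replicate_zero, List.flatten_nil, List.nil_append] at hmem
      obtain ⟨L, hjoin, hmemL⟩ := Language.mem_kstar.mp hmem
      cases L with
      | nil =>
        simp at hjoin
        rw [hjoin] at hw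
        simp at hw
        omega
      | cons y L' =>
        have hy : y ∈ S := hmemL y (by simp)
        have hylen := hS y hy
        have hlen : w.length = y.length + L'.flatten.length := by
          rw [hjoin]; simp
        have hym : y.length = m := by omega
        have hL' : L'.flatten = [] := by
          have : L'.flatten.length = 0 := by omega
          exact List.eq_nil_of_length_eq_zero this
        simp only [List.flatten_cons] at hjoin
        rw [hL'] at hjoin
        simp at hjoin
        rw [hjoin] at hwS
        exact hwS hy
    | succ k ih =>
      intro hmem
      have hrw : g (k + 1) = v ++ g k := by
        simp [hg, List.replicate_succ, List.flatten_cons, List.append_assoc]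
      rw [hrw] at hmem
      obtain ⟨L, hjoin, hmemL⟩ := Language.mem_kstar.mp hmem
      cases L with
      | nil =>
        simp only [List.flatten_nil] at hjoin
        have h0 : v = [] := by
          have := List.append_eq_nil_iff.mp hjoin
          exact this.1
        rw [h0] at hv
        simp at hv
        omega
      | cons y L' =>
        have hy : y ∈ S := hmemL y (by simp)
        have hylen := hS y hy
        simp only [List.flatten_cons] at hjoin
        rcases hylen with hym | hyn
        · -- y = w
          have : y = w := by
            have h1 : (v ++ g k).take m = w := by
              have : v ++ g k = w ++ (u ++ g k) := by simp [hvdef, List.append_assoc]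
              rw [this, ← hw, List.take_left]
            have h2 : (y ++ L'.flatten).take m = y := by
              rw [← hym, List.take_left]
            rw [← hjoin, h1] at h2
            exact h2.symm
          rw [this] at hy
          exact hwS hy
        · -- y = v
          have hyv : y = v := by
            have h1 : (v ++ g k).take n = v := by rw [← hv, List.take_left]
            have h2 : (y ++ L'.flatten).take n = y := by
              rw [← hyn, List.take_left]
            rw [← hjoin, h1] at h2
            exact h2.symm
          have hrest : L'.flatten = g k := by
            rw [hyv] at hjoin
            exact (List.append_cancel_left hjoin).symm
          apply ih
          rw [← hrest]
          exact Language.join_mem_kstar fun y hy => hmemL y (by simp [hy])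
  -- g is injective, so the complement is infinite
  have hinj : Function.Injective g := by
    intro j k hjk
    have := congrArg List.length hjk
    rw [hglen j, hglen k] at this
    have hn : 0 < n := by omega
    exact Nat.eq_of_mul_eq_mul_right hn (by omega)
  exact absurd (Set.infinite_of_injective_forall_mem hinj key) hcf.not_infinite
end

section
/- Let Σ be a finite nonempty alphabet and n ≥ 1 an integer. Suppose S is a set of words over Σ satisfying Σ^{n+1} ⊆ S ⊆ Σ^n ∪ Σ^{n+1} (S contains all words of length n+1, and every word of S has length n or n+1). If the Kleene star S* is co-finite, then S = Σ^n ∪ Σ^{n+1}, i.e., S also contains every word of length n. -/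
open Computability

private def padWord {α : Type*} (w : List α) (c : α) : ℕ → List α
  | 0 => w
  | (k+1) => w ++ c :: padWord w c k

private lemma padWord_length {α : Type*} (w : List α) (c : α) (k : ℕ) :
    (padWord w c k).length = w.length + k * (w.length + 1) := by
  induction k with
  | zero => simp [padWord]
  | succ k ih => simp [padWord, ih]; ring

private lemma padWord_not_join {α : Type*} {n : ℕ} (hn : 1 ≤ n) {S : Language α}
    {w : List α} (hwl : w.length = n) (hw : w ∉ S)
    (hsup : ∀ v ∈ S, v.length = n ∨ v.length = n + 1) (c : α) :
    ∀ L : List (List α), (∀ y ∈ L, y ∈ S) → ∀ k, L.flatten ≠ padWord w c k := by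
  intro L
  induction L with
  | nil =>
    intro _ k h
    have := congrArg List.length h
    simp [padWord_length, hwl] at this
    omega
  | cons y L' ih =>
    intro hmem k h
    rcases eq_or_ne y ([] : List α) with hy | hy
    · subst hy
      exact ih (fun z hz => hmem z (List.mem_cons_of_mem _ hz)) k (by simpa using h)
    have hyS : y ∈ S := hmem y (List.mem_cons_self)
    rcases hsup y hyS with hl | hl
    · -- y has length n, so y = w
      have hyw : y = w := by
        cases k with
        | zero =>
          simp only [padWord] at h
          have hlen : y.length = w.length := by rw [hl, hwl]
          have : y ++ L'.flatten = w ++ [] := by simpa using h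
          exact (List.append_inj this hlen).1
        | succ k' =>
          simp only [padWord] at h
          have : y ++ L'.flatten = w ++ (c :: padWord w c k') := by
            simpa using h
          have hlen : y.length = w.length := by rw [hl, hwl]
          exact (List.append_inj this hlen).1
      exact hw (hyw ▸ hyS)
    · -- y has length n+1
      cases k with
      | zero =>
        have := congrArg List.length h
        simp [padWord, hwl, List.length_append, hl] at this
        omega
      | succ k' =>
        simp only [padWord] at h
        have h2 : y ++ L'.flatten = (w ++ [c]) ++ padWord w c k' := by
          simpa using h
        have hlen : y.length = (w ++ [c]).length := by
          simp [hl, hwl]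
        obtain ⟨_, h3⟩ := List.append_inj h2 hlen
        exact ih (fun z hz => hmem z (List.mem_cons_of_mem _ hz)) k' h3

/-- If `Σ^{n+1} ⊆ S ⊆ Σ^n ∪ Σ^{n+1}` and the Kleene star `S∗` is co-finite,
then `S = Σ^n ∪ Σ^{n+1}`. -/
theorem cofinite_star_forces_full {α : Type*} [Fintype α] [Nonempty α] {n : ℕ}
    (hn : 1 ≤ n) (S : Language α)
    (hsub : ∀ w : List α, w.length = n + 1 → w ∈ S)
    (hsup : ∀ w ∈ S, w.length = n ∨ w.length = n + 1)
    (hcf : {w : List α | w ∉ S∗}.Finite) :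
    S = ({w | w.length = n} ∪ {w | w.length = n + 1} : Set (List α)) := by
  ext w
  constructor
  · intro hw
    rcases hsup w hw with h | h
    · exact Or.inl h
    · exact Or.inr h
  · rintro (hw | hw)
    · by_contra hwS
      obtain ⟨c⟩ := (inferInstance : Nonempty α)
      have hnot : ∀ k, padWord w c k ∈ {v : List α | v ∉ S∗} := by
        intro k hk
        rw [Language.mem_kstar] at hk
        obtain ⟨L, hL, hLmem⟩ := hk
        exact padWord_not_join hn hw hwS hsup c L hLmem k hL.symm
      have hinj : Function.Injective (padWord w c) := by
        intro a b hab
        have := congrArg List.length hab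
        simp only [padWord_length] at this
        exact Nat.eq_of_mul_eq_mul_right (Nat.succ_pos _) (Nat.add_left_cancel this)
      exact Set.infinite_of_injective_forall_mem hinj hnot hcf
    · exact hsub w hw
end

section
/- Let Σ be a finite nonempty alphabet and n ≥ 1 an integer. If S is a set of words over Σ containing every word of length n and every word of length n+1 (i.e., Σ^n ∪ Σ^{n+1} ⊆ S), then the Kleene star S* is co-finite; in fact every word over Σ of length at least n(n−1) belongs to S*. -/
open Computability

private lemma cons_mem_kstar {α : Type*} {S : Language α} {w v : List α}
    (hw : w ∈ S) (hv : v ∈ S∗) : w ++ v ∈ S∗ := by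
  rw [Language.mem_kstar] at hv ⊢
  obtain ⟨L, rfl, hL⟩ := hv
  refine ⟨w :: L, by simp, ?_⟩
  intro y hy
  rcases List.mem_cons.mp hy with rfl | hy
  · exact hw
  · exact hL y hy

private lemma chunks_mem {α : Type*} {n : ℕ} (hn : 1 ≤ n) (S : Language α)
    (hsub : ∀ w : List α, w.length = n ∨ w.length = n + 1 → w ∈ S) :
    ∀ a b (w : List α), w.length = a * n + b * (n + 1) → w ∈ S∗ := by
  intro a
  induction a with
  | zero =>
    intro b
    induction b with
    | zero =>
      intro w hw
      simp only [Nat.zero_mul, Nat.add_zero] at hw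
      rw [List.length_eq_zero_iff] at hw
      subst hw; exact Language.nil_mem_kstar S
    | succ b ih =>
      intro w hw
      rw [Nat.succ_mul] at hw
      have h1 : (w.take (n+1)) ∈ S := by
        apply hsub; right; rw [List.length_take]; omega
      have h2 : (w.drop (n+1)) ∈ S∗ := by
        apply ih; rw [List.length_drop]; omega
      have := cons_mem_kstar h1 h2
      rwa [List.take_append_drop] at this
  | succ a ih =>
    intro b w hw
    rw [Nat.succ_mul] at hw
    have h1 : (w.take n) ∈ S := by
      apply hsub; left; rw [List.length_take]; omega
    have h2 : (w.drop n) ∈ S∗ := by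
      apply ih b; rw [List.length_drop]; omega
    have := cons_mem_kstar h1 h2
    rwa [List.take_append_drop] at this

/-- If `S` contains all words of length `n` and all words of length `n+1`, then `S∗`
is co-finite; in fact every word of length at least `n (n - 1)` lies in `S∗`. -/
theorem full_two_lengths_star_cofinite {α : Type*} [Fintype α] [Nonempty α] {n : ℕ}
    (hn : 1 ≤ n) (S : Language α)
    (hsub : ∀ w : List α, w.length = n ∨ w.length = n + 1 → w ∈ S) :
    {w : List α | w ∉ S∗}.Finite ∧
      ∀ w : List α, n * (n - 1) ≤ w.length → w ∈ S∗ := by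
  have key : ∀ w : List α, n * (n - 1) ≤ w.length → w ∈ S∗ := by
    intro w hw
    obtain ⟨k, rfl⟩ : ∃ k, n = k + 1 := ⟨n - 1, by omega⟩
    have hw' : (k + 1) * k ≤ w.length := by simpa using hw
    obtain ⟨q, r, hqr, hr⟩ : ∃ q r, w.length = (k + 1) * q + r ∧ r < k + 1 :=
      ⟨w.length / (k + 1), w.length % (k + 1),
        (Nat.div_add_mod _ _).symm, Nat.mod_lt _ (by omega)⟩
    have hq : r ≤ q := by
      by_contra h
      push_neg at h
      have h1 : (k + 1) * (q + 1) ≤ (k + 1) * r := Nat.mul_le_mul_left _ h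
      have h2 : (k + 1) * r ≤ (k + 1) * k := Nat.mul_le_mul_left _ (by omega)
      have h3 : (k + 1) * (q + 1) = (k + 1) * q + (k + 1) := by ring
      omega
    obtain ⟨q', rfl⟩ : ∃ q', q = q' + r := ⟨q - r, by omega⟩
    apply chunks_mem (by omega) S hsub q' r
    have e1 : (k + 1) * (q' + r) = (k + 1) * q' + (k + 1) * r := by ring
    have e2 : q' * (k + 1) = (k + 1) * q' := Nat.mul_comm _ _
    have e3 : r * (k + 1 + 1) = (k + 1) * r + r := by ring
    omega
  refine ⟨?_, key⟩
  apply Set.Finite.subset (List.finite_length_lt α (n * (n - 1)))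
  intro w hw
  simp only [Set.mem_setOf_eq] at *
  by_contra h
  exact hw (key w (by omega))
end

section
/- Let Σ be a finite nonempty alphabet and n ≥ 1 an integer. Suppose S is a set of words over Σ satisfying Σ^{n+1} ⊆ S ⊆ Σ^n ∪ Σ^{n+1} (S contains all words of length n+1, and every word of S has length n or n+1). Then the Kleene star S* is co-finite if and only if S contains every word of length n (i.e., Σ^n ⊆ S). -/
open Computability

private lemma my_append_mem_kstar {α : Type*} {S : Language α} {y z : List α}
    (hy : y ∈ S) (hz : z ∈ S∗) : y ++ z ∈ S∗ := by
  rw [Language.mem_kstar] at hz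
  obtain ⟨L, rfl, hL⟩ := hz
  have : y ++ L.flatten = (y :: L).flatten := by simp
  rw [this]
  refine Language.join_mem_kstar ?_
  intro v hv
  rcases List.mem_cons.mp hv with rfl | h
  · exact hy
  · exact hL _ h

private lemma my_kstar_aux {α : Type*} {n : ℕ} {S : Language α}
    (h1 : ∀ w : List α, w.length = n → w ∈ S)
    (h2 : ∀ w : List α, w.length = n + 1 → w ∈ S) :
    ∀ a b (x : List α), x.length = a * n + b * (n + 1) → x ∈ S∗ := by
  intro a
  induction a with
  | zero =>
    intro b
    induction b with
    | zero =>
      intro x hx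
      simp only [Nat.zero_mul, Nat.add_zero] at hx
      rw [List.length_eq_zero_iff] at hx
      subst hx
      exact Language.nil_mem_kstar S
    | succ b ih =>
      intro x hx
      have hlen : n + 1 ≤ x.length := by rw [hx]; nlinarith
      have hx' : x = x.take (n+1) ++ x.drop (n+1) := (List.take_append_drop _ _).symm
      rw [hx']
      refine my_append_mem_kstar (h2 _ ?_) (ih _ ?_)
      · rw [List.length_take, Nat.min_eq_left hlen]
      · rw [List.length_drop, hx, Nat.succ_mul, Nat.zero_mul, Nat.zero_add,
          Nat.add_sub_cancel, Nat.zero_add]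
  | succ a ih =>
    intro b x hx
    have hn1 : n ≤ x.length := by rw [hx]; nlinarith
    have hx' : x = x.take n ++ x.drop n := (List.take_append_drop _ _).symm
    rw [hx']
    refine my_append_mem_kstar (h1 _ ?_) (ih b _ ?_)
    · rw [List.length_take, Nat.min_eq_left hn1]
    · rw [List.length_drop, hx, Nat.succ_mul, Nat.add_right_comm, Nat.add_sub_cancel]

/-- For `Σ^{n+1} ⊆ S ⊆ Σ^n ∪ Σ^{n+1}`, the star `S∗` is co-finite
if and only if `Σ^n ⊆ S`. -/
theorem star_cofinite_iff_contains_length_n {α : Type*} [Fintype α] [Nonempty α] {n : ℕ}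
    (hn : 1 ≤ n) (S : Language α)
    (hsub : ∀ w : List α, w.length = n + 1 → w ∈ S)
    (hsup : ∀ w ∈ S, w.length = n ∨ w.length = n + 1) :
    {w : List α | w ∉ S∗}.Finite ↔ ∀ w : List α, w.length = n → w ∈ S := by
  constructor
  · intro hfin w hw
    by_contra hwS
    obtain ⟨c⟩ := ‹Nonempty α›
    set u : ℕ → List α := fun m => (List.replicate m (w ++ [c])).flatten ++ w with hu
    have hulen : ∀ m, (u m).length = m * (n + 1) + n := by
      intro m
      simp [hu, hw]
    have key : ∀ m (L : List (List α)), (∀ y ∈ L, y ∈ S) → L.flatten ≠ u m := by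
      intro m
      induction m with
      | zero =>
        intro L hL heq
        have hu0 : u 0 = w := by simp [hu]
        rw [hu0] at heq
        cases L with
        | nil =>
          rw [← heq] at hw
          simp at hw
          omega
        | cons y L' =>
          have hy := hL y (by simp)
          rcases hsup y hy with h | h
          · have hlen := congrArg List.length heq
            simp only [List.flatten_cons, List.length_append, h, hw] at hlen
            have hL'nil : L'.flatten = [] := List.length_eq_zero_iff.mp (by omega)
            rw [List.flatten_cons, hL'nil, List.append_nil] at heq
            exact hwS (heq ▸ hy)
          · have hle : y.length ≤ w.length := by
              rw [← heq, List.flatten_cons, List.length_append]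
              exact Nat.le_add_right _ _
            omega
      | succ m ih =>
        intro L hL heq
        have hum : u (m + 1) = (w ++ [c]) ++ u m := by
          simp [hu, List.replicate_succ, List.flatten_cons, List.append_assoc]
        cases L with
        | nil =>
          have hlen := congrArg List.length heq
          rw [hulen (m+1)] at hlen
          simp at hlen
          omega
        | cons y L' =>
          have hy := hL y (by simp)
          have hflat : y ++ L'.flatten = (w ++ [c]) ++ u m := by
            rw [← hum]; simpa [List.flatten_cons] using heq
          rcases hsup y hy with h | h
          · -- y has length n, must equal w
            have hty : y = ((w ++ [c]) ++ u m).take n := by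
              rw [← hflat, ← h, List.take_left]
            have hyw : y = w := by
              rw [hty, List.append_assoc, List.take_append_of_le_length (by simp [hw]),
                List.take_of_length_le (by simp [hw])]
            exact hwS (hyw ▸ hy)
          · -- y has length n+1, must equal w ++ [c]
            have hyw : y = w ++ [c] := by
              have hty : y = ((w ++ [c]) ++ u m).take (n+1) := by
                rw [← hflat, ← h, List.take_left]
              rw [hty, List.take_append_of_le_length (by simp [hw]),
                List.take_of_length_le (by simp [hw])]
            have hrest : L'.flatten = u m := by
              rw [hyw] at hflat
              exact List.append_cancel_left hflat
            exact ih L' (fun z hz => hL z (by simp [hz])) hrest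
    have hsubset : Set.range u ⊆ {w : List α | w ∉ S∗} := by
      rintro x ⟨m, rfl⟩ hx
      rw [Language.mem_kstar] at hx
      obtain ⟨L, hLx, hL⟩ := hx
      exact key m L hL hLx.symm
    have hinj : Function.Injective u := by
      intro a b hab
      have hl := congrArg List.length hab
      rw [hulen a, hulen b] at hl
      have := Nat.add_right_cancel hl
      exact Nat.eq_of_mul_eq_mul_right (by omega) this
    exact absurd hfin ((Set.infinite_range_of_injective hinj).mono hsubset)
  · intro hall
    apply Set.Finite.subset (List.finite_length_lt α (n * n))
    intro x hx
    by_contra hlen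
    simp only [Set.mem_setOf_eq, not_lt] at hlen
    apply hx
    have hmod : x.length % n < n := Nat.mod_lt _ (by omega)
    have hdiv : n * (x.length / n) + x.length % n = x.length := Nat.div_add_mod _ _
    have hq : n ≤ x.length / n := Nat.le_div_iff_mul_le (by omega) |>.mpr (by omega)
    refine my_kstar_aux hall hsub (x.length / n - x.length % n) (x.length % n) x ?_
    obtain ⟨k, hk⟩ := Nat.exists_eq_add_of_le (le_trans hmod.le hq)
    rw [hk] at hdiv ⊢
    rw [Nat.add_sub_cancel_left]
    ring_nf
    ring_nf at hdiv
    linarith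
end

section
/- Consider a 3SAT instance over n ≥ 1 Boolean variables indexed by Fin n, consisting of m clauses c_1, …, c_m, where each clause is a triple of literals and a literal is a pair (i, b) ∈ Fin n × Bool, meaning variable i must take value b. An assignment f : Fin n → Bool satisfies a clause if it agrees with at least one of its three literals, and the instance is satisfiable if some assignment satisfies every clause. For each clause c, let F_c be the set of words w over the alphabet Bool of length n such that the assignment i ↦ (i-th letter of w) falsifies c (agrees with none of the three literals of c). Let S = (F_{c_1} ∪ ⋯ ∪ F_{c_m}) ∪ Bool^{n+1}, where Bool^{n+1} is the set of all words over Bool of length n+1. Then the 3SAT instance is satisfiable if and only if the Kleene star S* is NOT co-finite. -/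
open Computability

/-- A literal over `n` variables: a variable index and the Boolean value it demands. -/
abbrev Literal (n : ℕ) := Fin n × Bool

/-- A 3SAT clause: a triple of literals. -/
abbrev Clause (n : ℕ) := Literal n × Literal n × Literal n

/-- An assignment satisfies a clause if it agrees with at least one of its three literals. -/
def SatisfiesClause {n : ℕ} (f : Fin n → Bool) (c : Clause n) : Prop :=
  f c.1.1 = c.1.2 ∨ f c.2.1.1 = c.2.1.2 ∨ f c.2.2.1 = c.2.2.2

/-- The words of length `n` over `Bool` whose induced assignment falsifies clause `c`. -/
def falsifyingWords {n : ℕ} (c : Clause n) : Language Bool :=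
  {w : List Bool | ∃ h : w.length = n,
    ¬ SatisfiesClause (fun i : Fin n => w.get (Fin.cast h.symm i)) c}

/-- Witness words: `zWord w k = w ++ (w ++ [false]) ++ ⋯ ++ (w ++ [false])` rearranged:
`zWord w 0 = w`, `zWord w (k+1) = (w ++ [false]) ++ zWord w k`. -/
def zWord (w : List Bool) : ℕ → List Bool
  | 0 => w
  | k + 1 => (w ++ [false]) ++ zWord w k

lemma zWord_length (w : List Bool) (k : ℕ) :
    (zWord w k).length = w.length + k * (w.length + 1) := by
  induction k with
  | zero => simp [zWord]
  | succ k ih => simp only [zWord, List.length_append, ih, List.length_singleton]; ring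

lemma zWord_prefix (w : List Bool) (k : ℕ) : ∃ t, zWord w k = w ++ t := by
  cases k with
  | zero => exact ⟨[], by simp [zWord]⟩
  | succ k => exact ⟨[false] ++ zWord w k, by simp [zWord]⟩

/-- A 3SAT instance is satisfiable iff the star of
`S = (F_{c₁} ∪ ⋯ ∪ F_{c_m}) ∪ Bool^{n+1}` is not co-finite. -/
theorem sat_iff_star_not_cofinite {n m : ℕ} (hn : 1 ≤ n)
    (c : Fin m → Clause n)
    (S : Language Bool)
    (hS : S = ((⋃ i : Fin m, falsifyingWords (c i)) ∪
        {w | w.length = n + 1} : Set (List Bool))) :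
    (∃ f : Fin n → Bool, ∀ i : Fin m, SatisfiesClause f (c i)) ↔
      ¬ {w : List Bool | w ∉ S∗}.Finite := by
  have hSlen : ∀ w ∈ S, w.length = n ∨ w.length = n + 1 := by
    intro w hw
    rw [hS] at hw
    rcases hw with hw | hw
    · obtain ⟨i, hi⟩ := Set.mem_iUnion.1 hw
      obtain ⟨h, -⟩ := hi
      exact Or.inl h
    · exact Or.inr hw
  constructor
  · rintro ⟨f, hf⟩ hfin
    set w : List Bool := List.ofFn f with hw
    have hwlen : w.length = n := List.length_ofFn
    have hwS : w ∉ S := by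
      rw [hS]
      rintro (hmem | hmem)
      · obtain ⟨i, hlen, hns⟩ := Set.mem_iUnion.1 hmem
        apply hns
        have heq : (fun j : Fin n => w.get (Fin.cast hlen.symm j)) = f := by
          funext j
          simp [hw, List.get_ofFn]
        rw [heq]
        exact hf i
      · simp only [Set.mem_setOf_eq, hwlen] at hmem
        omega
    -- if `y` of length `n` is a prefix of `w ++ t`, then `y = w`
    have hpref : ∀ (y r t : List Bool), y.length = n → y ++ r = w ++ t → y = w := by
      intro y r t hy he
      have h1 : (y ++ r).take n = y := by
        rw [← hy]; exact List.take_left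
      have h2 : (w ++ t).take n = w := by
        rw [← hwlen]; exact List.take_left
      rw [← h1, he, h2]
    have hz : ∀ k, zWord w k ∉ S∗ := by
      intro k
      induction k with
      | zero =>
        rintro ⟨L, hjoin, hL⟩
        cases L with
        | nil =>
          have : w.length = 0 := by
            have : w = [] := by simpa [zWord] using hjoin
            simp [this]
          omega
        | cons y L' =>
          have hy := hL y List.mem_cons_self
          have hjoin' : y ++ L'.flatten = w ++ [] := by
            simpa [zWord] using hjoin.symm
          rcases hSlen y hy with hyl | hyl
          · exact hwS (hpref y L'.flatten [] hyl hjoin' ▸ hy)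
          · have : y.length ≤ w.length := by
              have := congrArg List.length hjoin'
              simp at this
              omega
            omega
      | succ k ih =>
        rintro ⟨L, hjoin, hL⟩
        cases L with
        | nil =>
          have h0 : (zWord w (k+1)).length = 0 := by rw [hjoin]; simp
          rw [zWord_length] at h0
          omega
        | cons y L' =>
          have hy := hL y List.mem_cons_self
          have hjoin' : y ++ L'.flatten = (w ++ [false]) ++ zWord w k := by
            simpa [zWord] using hjoin.symm
          rcases hSlen y hy with hyl | hyl
          · have : y = w := by
              apply hpref y L'.flatten ([false] ++ zWord w k) hyl
              rw [hjoin', List.append_assoc]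
            exact hwS (this ▸ hy)
          · have hl : y.length = (w ++ [false]).length := by
              simp [hyl, hwlen]
            obtain ⟨-, h2⟩ := List.append_inj hjoin' hl
            exact ih ⟨L', h2.symm, fun z hz => hL z (List.mem_cons_of_mem y hz)⟩
    -- the zWords are injective, giving infinitely many words outside S∗
    have hinj : Function.Injective (zWord w) := by
      intro a b hab
      have := congrArg List.length hab
      rw [zWord_length, zWord_length] at this
      have hpos : 0 < w.length + 1 := Nat.succ_pos _
      exact Nat.eq_of_mul_eq_mul_right hpos (by omega)
    exact (Set.infinite_of_injective_forall_mem hinj (fun k => hz k)) hfin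
  · intro hinf
    by_contra hsat
    push_neg at hsat
    apply hinf
    -- every word of length n is falsifying for some clause, hence in S
    have hlenn : ∀ x : List Bool, x.length = n → x ∈ S := by
      intro x hx
      rw [hS]
      left
      obtain ⟨i, hi⟩ := hsat (fun j : Fin n => x.get (Fin.cast hx.symm j))
      exact Set.mem_iUnion.2 ⟨i, hx, hi⟩
    have hlenn1 : ∀ x : List Bool, x.length = n + 1 → x ∈ S := by
      intro x hx
      rw [hS]
      exact Or.inr hx
    -- every word whose length is a*n + b*(n+1) is in S∗
    have key : ∀ k a b (x : List Bool), a + b = k → x.length = a * n + b * (n + 1) → x ∈ S∗ := by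
      intro k
      induction k with
      | zero =>
        intro a b x hab hx
        have ha : a = 0 := by omega
        have hb : b = 0 := by omega
        have : x = [] := by
          rw [ha, hb] at hx; simpa using List.length_eq_zero_iff.1 (by simpa using hx)
        rw [this]
        exact Language.nil_mem_kstar S
      | succ k ih =>
        intro a b x hab hx
        rcases Nat.eq_zero_or_pos a with ha | ha
        · -- a = 0, so b = k+1 > 0; peel off a block of length n+1
          have hb : b = k + 1 := by omega
          have hlong : n + 1 ≤ x.length := by
            rw [hx, ha, hb]; nlinarith
          have h1 : (x.take (n+1)) ∈ S := by
            apply hlenn1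
            rw [List.length_take]
            omega
          have h2 : (x.drop (n+1)) ∈ S∗ := by
            apply ih 0 k
            · omega
            · rw [List.length_drop, hx, ha, hb]; ring_nf; omega
          obtain ⟨L, hLj, hLm⟩ := h2
          refine ⟨x.take (n+1) :: L, ?_, ?_⟩
          · simp [← hLj]
          · rintro z hz
            rcases List.mem_cons.1 hz with rfl | hz
            · exact h1
            · exact hLm z hz
        · -- a > 0; peel off a block of length n
          have hlong : n ≤ x.length := by
            rw [hx]; nlinarith
          have h1 : (x.take n) ∈ S := by
            apply hlenn
            rw [List.length_take]
            omega
          obtain ⟨a', rfl⟩ : ∃ a', a = a' + 1 := ⟨a - 1, by omega⟩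
          have h2 : (x.drop n) ∈ S∗ := by
            apply ih a' b
            · omega
            · rw [List.length_drop, hx, Nat.succ_mul]
              omega
          obtain ⟨L, hLj, hLm⟩ := h2
          refine ⟨x.take n :: L, ?_, ?_⟩
          · simp [← hLj]
          · rintro z hz
            rcases List.mem_cons.1 hz with rfl | hz
            · exact h1
            · exact hLm z hz
    -- every word of length ≥ n*n is in S∗, so the complement is finite
    apply Set.Finite.subset (List.finite_length_lt Bool (n * n))
    intro x hx
    simp only [Set.mem_setOf_eq] at hx ⊢
    by_contra hlen
    push_neg at hlen
    apply hx
    have hr : x.length % n < n := Nat.mod_lt _ (by omega)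
    have hq : n ≤ x.length / n := by
      rw [Nat.le_div_iff_mul_le (by omega)]
      omega
    have hqr : (x.length / n) * n + x.length % n = x.length := by
      rw [mul_comm]; exact Nat.div_add_mod x.length n
    obtain ⟨t, ht⟩ : ∃ t, x.length / n = x.length % n + t := ⟨x.length / n - x.length % n, by omega⟩
    refine key (t + x.length % n) t (x.length % n) x rfl ?_
    have h1 : t * n + x.length % n * (n + 1) = (x.length % n + t) * n + x.length % n := by ring
    rw [h1, ← ht]
    omega
end

section
/- Consider a 3SAT instance over n ≥ 1 Boolean variables indexed by Fin n, consisting of m clauses c_1, …, c_m, where each clause is a triple of literals and a literal is a pair (i, b) ∈ Fin n × Bool, meaning variable i must take value b. An assignment f : Fin n → Bool satisfies a clause if it agrees with at least one of its three literals. If the instance is UNSATISFIABLE (every assignment falsifies some clause), then, letting F_c be the set of words w over Bool of length n whose induced assignment i ↦ (i-th letter of w) falsifies clause c, and letting S = (F_{c_1} ∪ ⋯ ∪ F_{c_m}) ∪ Bool^{n+1}, the Kleene star S* is co-finite; in fact S* contains every word over Bool of length at least n(n−1). -/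
open Computability

/-- If the 3SAT instance is unsatisfiable, the star of
`S = (F_{c₁} ∪ ⋯ ∪ F_{c_m}) ∪ Bool^{n+1}` is co-finite; in fact it contains every
word of length at least `n (n - 1)`. -/
theorem unsat_star_cofinite {n m : ℕ} (hn : 1 ≤ n)
    (c : Fin m → Clause n)
    (hunsat : ∀ f : Fin n → Bool, ∃ i : Fin m, ¬ SatisfiesClause f (c i))
    (S : Language Bool)
    (hS : S = ((⋃ i : Fin m, falsifyingWords (c i)) ∪
        {w | w.length = n + 1} : Set (List Bool))) :
    {w : List Bool | w ∉ S∗}.Finite ∧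
      ∀ w : List Bool, n * (n - 1) ≤ w.length → w ∈ S∗ := by
  subst hS
  set S : Language Bool := ((⋃ i : Fin m, falsifyingWords (c i)) ∪
      {w | w.length = n + 1} : Set (List Bool)) with hSdef
  have hlen_n : ∀ w : List Bool, w.length = n → w ∈ S := by
    intro w h
    obtain ⟨i, hi⟩ := hunsat (fun i : Fin n => w.get (Fin.cast h.symm i))
    exact Or.inl (Set.mem_iUnion.2 ⟨i, ⟨h, hi⟩⟩)
  have hlen_n1 : ∀ w : List Bool, w.length = n + 1 → w ∈ S := fun w h => Or.inr h
  have hcons : ∀ x y : List Bool, x ∈ S → y ∈ S∗ → x ++ y ∈ S∗ := by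
    intro x y hx hy
    obtain ⟨L, rfl, hL⟩ := Language.mem_kstar.1 hy
    refine Language.mem_kstar.2 ⟨x :: L, by simp, ?_⟩
    intro z hz
    rcases List.mem_cons.1 hz with hz | hz
    · exact hz ▸ hx
    · exact hL z hz
  have key : ∀ a b : ℕ, ∀ w : List Bool, w.length = a * n + b * (n + 1) → w ∈ S∗ := by
    intro a
    induction a with
    | zero =>
      intro b
      induction b with
      | zero =>
        intro w hw
        simp only [Nat.zero_mul, Nat.add_zero] at hw
        rw [List.length_eq_zero_iff] at hw
        subst hw
        exact Language.nil_mem_kstar S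
      | succ b ih =>
        intro w hw
        have hb : (b + 1) * (n + 1) = b * (n + 1) + (n + 1) := by ring
        have h1 : (w.take (n + 1)).length = n + 1 := by
          rw [List.length_take]
          omega
        have h2 : (w.drop (n + 1)).length = 0 * n + b * (n + 1) := by
          rw [List.length_drop]
          omega
        have := hcons _ _ (hlen_n1 _ h1) (ih _ h2)
        rwa [List.take_append_drop] at this
    | succ a ih =>
      intro b w hw
      have ha : (a + 1) * n = a * n + n := by ring
      have h1 : (w.take n).length = n := by
        rw [List.length_take]
        omega
      have h2 : (w.drop n).length = a * n + b * (n + 1) := by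
        rw [List.length_drop]
        omega
      have := hcons _ _ (hlen_n _ h1) (ih b _ h2)
      rwa [List.take_append_drop] at this
  have key2 : ∀ L : ℕ, n * (n - 1) ≤ L → ∃ a b : ℕ, L = a * n + b * (n + 1) := by
    intro L hL
    have hdm : n * (L / n) + L % n = L := Nat.div_add_mod L n
    have hr : L % n < n := Nat.mod_lt _ hn
    have hq : L % n ≤ L / n := by
      by_contra hc
      push_neg at hc
      have h1 : L / n + 1 ≤ n - 1 := by omega
      have h2 : n * (L / n + 1) ≤ n * (n - 1) := Nat.mul_le_mul_left n h1
      have h3 : n * (L / n + 1) = n * (L / n) + n := by ring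
      omega
    refine ⟨L / n - L % n, L % n, ?_⟩
    have hqa : L / n = (L / n - L % n) + L % n := (Nat.sub_add_cancel hq).symm
    calc L = n * (L / n) + L % n := hdm.symm
      _ = n * ((L / n - L % n) + L % n) + L % n := by rw [← hqa]
      _ = (L / n - L % n) * n + L % n * (n + 1) := by ring
  have main : ∀ w : List Bool, n * (n - 1) ≤ w.length → w ∈ S∗ := by
    intro w hw
    obtain ⟨a, b, h⟩ := key2 w.length hw
    exact key a b w h
  refine ⟨?_, main⟩
  apply Set.Finite.subset (List.finite_length_lt (α := Bool) (n * (n - 1)))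
  intro w hw
  by_contra h
  simp only [Set.mem_setOf_eq, not_lt] at h
  exact hw (main w h)
end

section
/- Let M be a deterministic finite automaton over a finite nonempty alphabet Σ whose state set has exactly n states (n ≥ 1), and let L ⊆ Σ* be the language accepted by M. Then L is co-finite (its complement Σ* \ L is finite) if and only if M accepts every word of length ℓ for every ℓ with n ≤ ℓ < 2n. -/
/-- An `n`-state DFA accepts a co-finite language iff it accepts every word of
length `ℓ` for every `ℓ` with `n ≤ ℓ < 2 n`. -/
theorem dfa_cofinite_iff {α σ : Type*} [Fintype α] [Nonempty α] [Fintype σ]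
    {n : ℕ} (hn : 1 ≤ n) (hcard : Fintype.card σ = n) (M : DFA α σ) :
    {w : List α | w ∉ M.accepts}.Finite ↔
      ∀ w : List α, n ≤ w.length → w.length < 2 * n → w ∈ M.accepts := by
  set N : DFA α σ := ⟨M.step, M.start, M.acceptᶜ⟩ with hN
  have hmem : ∀ w : List α, w ∈ N.accepts ↔ w ∉ M.accepts := by
    intro w
    simp [DFA.mem_accepts, N, DFA.eval, DFA.evalFrom]
  have hset : {w : List α | w ∉ M.accepts} = N.accepts := by
    ext w; exact (hmem w).symm
  rw [hset]
  constructor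
  · intro hfin w hlw hlw'
    by_contra hw
    rw [← hmem] at hw
    obtain ⟨a, b, c, hwe, hab, hb, hsub⟩ := N.pumping_lemma hw (hcard ▸ hlw)
    refine Set.infinite_of_injective_forall_mem
      (f := fun k : ℕ => a ++ (List.replicate k b).flatten ++ c) ?_ ?_ hfin
    · intro i j hij
      have : a.length + i * b.length + c.length = a.length + j * b.length + c.length := by
        have := congrArg List.length hij
        simpa [List.length_flatten, List.map_replicate, List.sum_replicate, smul_eq_mul,
          mul_comm] using this
      have hb' : 0 < b.length := List.length_pos_iff.mpr hb
      have h3 : i * b.length = j * b.length := by omega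
      exact Nat.eq_of_mul_eq_mul_right hb' h3
    · intro k
      apply hsub
      refine Language.mem_mul.mpr ⟨a ++ (List.replicate k b).flatten, ?_, c, rfl, rfl⟩
      refine Language.mem_mul.mpr ⟨a, rfl, _, ?_, rfl⟩
      exact Language.join_mem_kstar (by intro y hy; rw [List.eq_of_mem_replicate hy]; rfl)
  · intro hall
    have key : ∀ m, ∀ w : List α, w.length = m → w ∈ N.accepts → w.length < n := by
      intro m
      induction m using Nat.strong_induction_on with
      | _ m ih =>
        intro w hwm hw
        by_contra hlen
        push_neg at hlen
        have h2n : 2 * n ≤ w.length := by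
          by_contra h
          exact (hmem w).mp hw (hall w hlen (by omega))
        obtain ⟨a, b, c, hwe, hab, hb, hsub⟩ := N.pumping_lemma hw (by omega)
        have hac : a ++ c ∈ N.accepts := by
          apply hsub
          refine Language.mem_mul.mpr ⟨a, ?_, c, rfl, by simp⟩
          exact Language.mem_mul.mpr ⟨a, rfl, [], Language.nil_mem_kstar _, by simp⟩
        rw [hcard] at hab
        have hb' : 0 < b.length := List.length_pos_iff.mpr hb
        have hwl : w.length = a.length + b.length + c.length := by
          rw [hwe]; simp; omega
        have hlt : (a ++ c).length < m := by simp; omega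
        have := ih (a ++ c).length hlt (a ++ c) rfl hac
        simp at this
        omega
    apply (List.finite_length_lt (α := α) n).subset
    intro w hw
    exact key w.length w rfl hw
end
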